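/- For any finite set G of polynomials of degree at most d and the Bernstein cone Σ≥_d, the set C = posi(G ∪ Σ≥_d) is P-coherent (i.e., contains no polynomial in the interior of -Σ≥_d) if and only if the dual set Q = {L : L linear functional with L(1) = 1, L(p) ≥ 0 for all p ∈ Σ≥_d, and L(g) ≥ 0 for all g ∈ G} is nonempty. -/

import Mathlib

open MvPolynomial

/-- The multivariate Bernstein polynomial `B_{γ,d}` in `n` variables. -/
noncomputable def bern (n d : ℕ) (γ : Fin n → ℕ) : MvPolynomial (Fin n) ℝ :=
  C ((d.factorial / ((∏ i, (γ i).factorial) * (d - ∑ i, γ i).factorial) : ℕ) : ℝ) *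
    (∏ i, X i ^ γ i) * (1 - ∑ i, X i) ^ (d - ∑ i, γ i)

/-- Multi-indices `γ ∈ ℕⁿ` with `|γ| ≤ d`, as a finset. -/
def multiIdx (n d : ℕ) : Finset (Fin n → ℕ) :=
  (Fintype.piFinset fun _ : Fin n => Finset.range (d + 1)).filter fun γ => ∑ i, γ i ≤ d

/-- `θ₁^{α₁}⋯θₙ^{αₙ}(1-θ₁-⋯-θₙ)^{α_{n+1}}` for `α ∈ ℕ^{n+1}`. -/
noncomputable def kvGen (n : ℕ) (α : Fin (n + 1) → ℕ) : MvPolynomial (Fin n) ℝ :=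
  (∏ i : Fin n, X i ^ α i.castSucc) * (1 - ∑ i, X i) ^ α (Fin.last n)

/-- Multi-indices `α ∈ ℕ^{n+1}` with `|α| ≤ d`. -/
def kvIdxLe (n d : ℕ) : Finset (Fin (n + 1) → ℕ) :=
  (Fintype.piFinset fun _ : Fin (n + 1) => Finset.range (d + 1)).filter fun α => ∑ i, α i ≤ d

/-- Multi-indices `α ∈ ℕ^{n+1}` with `|α| = d`. -/
def kvIdxEq (n d : ℕ) : Finset (Fin (n + 1) → ℕ) :=
  (Fintype.piFinset fun _ : Fin (n + 1) => Finset.range (d + 1)).filter fun α => ∑ i, α i = d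

/-- The Bernstein cone `Σ≥_d`: nonnegative combinations over `|α| ≤ d`. -/
noncomputable def coneLe (n d : ℕ) : Set (MvPolynomial (Fin n) ℝ) :=
  {g | ∃ u : (Fin (n + 1) → ℕ) → ℝ, (∀ α, 0 ≤ u α) ∧
    g = ∑ α ∈ kvIdxLe n d, C (u α) * kvGen n α}

/-- The cone `Σ̃≥_d`: nonnegative combinations over `|α| = d`. -/
noncomputable def coneEq (n d : ℕ) : Set (MvPolynomial (Fin n) ℝ) :=
  {g | ∃ u : (Fin (n + 1) → ℕ) → ℝ, (∀ α, 0 ≤ u α) ∧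
    g = ∑ α ∈ kvIdxEq n d, C (u α) * kvGen n α}

/-- Conic hull: all finite nonnegative linear combinations of elements of `G`. -/
def posi {E : Type*} [AddCommMonoid E] [Module ℝ E] (G : Set E) : Set E :=
  {f | ∃ (k : ℕ) (l : Fin k → ℝ) (g : Fin k → E),
    (∀ i, 0 ≤ l i) ∧ (∀ i, g i ∈ G) ∧ f = ∑ i, l i • g i}

/-- The (algebraic) interior, i.e. the core, of a set `S` within the
finite-dimensional space of polynomials of total degree at most `d`; for convex
sets in finite dimensions this coincides with the topological interior. -/
def core (n d : ℕ) (S : Set (MvPolynomial (Fin n) ℝ)) : Set (MvPolynomial (Fin n) ℝ) :=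
  {f | f ∈ S ∧ ∀ h : MvPolynomial (Fin n) ℝ, h.totalDegree ≤ d →
    ∃ ε : ℝ, 0 < ε ∧ ∀ t : ℝ, 0 ≤ t → t ≤ ε → f + t • h ∈ S}

lemma mem_kvIdxEq {n d : ℕ} {α : Fin (n + 1) → ℕ} : α ∈ kvIdxEq n d ↔ ∑ i, α i = d := by
  simp only [kvIdxEq, Finset.mem_filter, Fintype.mem_piFinset, Finset.mem_range]
  refine ⟨fun h => h.2, fun h => ⟨fun i => ?_, h⟩⟩
  have : α i ≤ ∑ j, α j := Finset.single_le_sum (f := α) (fun j _ => Nat.zero_le _) (Finset.mem_univ i)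
  omega

lemma kvGen_add (n : ℕ) (α β : Fin (n + 1) → ℕ) :
    kvGen n (α + β) = kvGen n α * kvGen n β := by
  simp only [kvGen, Pi.add_apply, pow_add, Finset.prod_mul_distrib]
  ring

lemma kvGen_zero (n : ℕ) : kvGen n 0 = 1 := by
  simp [kvGen]

lemma sum_kvGen_single (n : ℕ) :
    ∑ i : Fin (n + 1), kvGen n (Pi.single i 1) = 1 := by
  rw [Fin.sum_univ_castSucc]
  have h1 : ∀ j : Fin n, kvGen n (Pi.single j.castSucc 1) = X j := by
    intro j
    have hlast : Pi.single (M := fun _ : Fin (n+1) => ℕ) j.castSucc 1 (Fin.last n) = 0 := by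
      apply Pi.single_eq_of_ne
      exact (Fin.castSucc_lt_last j).ne'
    have hcast : ∀ k : Fin n, Pi.single (M := fun _ : Fin (n+1) => ℕ) j.castSucc 1 k.castSucc
        = Pi.single (M := fun _ : Fin n => ℕ) j 1 k := by
      intro k
      rcases eq_or_ne k j with rfl | hk
      · simp
      · rw [Pi.single_eq_of_ne (fun h => hk (Fin.castSucc_injective n h)), Pi.single_eq_of_ne hk]
    simp only [kvGen, hlast, pow_zero, mul_one]
    rw [Finset.prod_congr rfl fun k _ => by rw [hcast k]]
    simp [Pi.single_apply, Finset.prod_ite_eq']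
  have h2 : kvGen n (Pi.single (Fin.last n) 1) = 1 - ∑ i, X i := by
    have : ∀ k : Fin n, Pi.single (M := fun _ : Fin (n+1) => ℕ) (Fin.last n) 1 k.castSucc = 0 := by
      intro k
      exact Pi.single_eq_of_ne (Fin.castSucc_lt_last k).ne _
    simp [kvGen, this]
  rw [Finset.sum_congr rfl fun j _ => h1 j, h2]
  ring

lemma kvGen_expand (n : ℕ) (α : Fin (n + 1) → ℕ) :
    kvGen n α = ∑ i : Fin (n + 1), kvGen n (α + Pi.single i 1) := by
  calc kvGen n α = kvGen n α * ∑ i : Fin (n + 1), kvGen n (Pi.single i 1) := by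
        rw [sum_kvGen_single, mul_one]
    _ = _ := by
        rw [Finset.mul_sum]
        exact Finset.sum_congr rfl fun i _ => (kvGen_add n α _).symm

noncomputable def stepc (n e : ℕ) (c : (Fin (n + 1) → ℕ) → ℝ) : (Fin (n + 1) → ℕ) → ℝ :=
  fun β => ∑ p ∈ (kvIdxEq n e) ×ˢ (Finset.univ : Finset (Fin (n + 1))),
    if p.1 + Pi.single p.2 1 = β then c p.1 else 0

lemma add_single_mem (n e : ℕ) {α : Fin (n + 1) → ℕ} (hα : α ∈ kvIdxEq n e) (i : Fin (n + 1)) :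
    α + Pi.single i 1 ∈ kvIdxEq n (e + 1) := by
  rw [mem_kvIdxEq] at hα ⊢
  simp only [Pi.add_apply, Finset.sum_add_distrib, hα, Finset.sum_pi_single']
  simp

lemma kv_step (n e : ℕ) (c : (Fin (n + 1) → ℕ) → ℝ) :
    ∑ α ∈ kvIdxEq n e, C (c α) * kvGen n α =
    ∑ β ∈ kvIdxEq n (e + 1), C (stepc n e c β) * kvGen n β := by
  calc ∑ α ∈ kvIdxEq n e, C (c α) * kvGen n α
      = ∑ α ∈ kvIdxEq n e, ∑ i : Fin (n + 1), C (c α) * kvGen n (α + Pi.single i 1) := by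
        refine Finset.sum_congr rfl fun α _ => ?_
        rw [kvGen_expand n α, Finset.mul_sum]
    _ = ∑ p ∈ (kvIdxEq n e) ×ˢ (Finset.univ : Finset (Fin (n + 1))),
          C (c p.1) * kvGen n (p.1 + Pi.single p.2 1) := by
        rw [Finset.sum_product]
    _ = ∑ p ∈ (kvIdxEq n e) ×ˢ (Finset.univ : Finset (Fin (n + 1))),
          ∑ β ∈ kvIdxEq n (e + 1),
            if p.1 + Pi.single p.2 1 = β then C (c p.1) * kvGen n β else 0 := by
        refine Finset.sum_congr rfl fun p hp => ?_
        rw [Finset.sum_ite_eq (kvIdxEq n (e + 1)) _ (fun β => C (c p.1) * kvGen n β),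
          if_pos (add_single_mem n e (Finset.mem_product.1 hp).1 p.2)]
    _ = ∑ β ∈ kvIdxEq n (e + 1), ∑ p ∈ (kvIdxEq n e) ×ˢ (Finset.univ : Finset (Fin (n + 1))),
          if p.1 + Pi.single p.2 1 = β then C (c p.1) * kvGen n β else 0 := Finset.sum_comm
    _ = _ := by
        refine Finset.sum_congr rfl fun β _ => ?_
        rw [stepc, map_sum, Finset.sum_mul]
        refine Finset.sum_congr rfl fun p _ => ?_
        split_ifs <;> simp

lemma stepc_pos {n e : ℕ} {c : (Fin (n + 1) → ℕ) → ℝ} (hc : ∀ α ∈ kvIdxEq n e, 1 ≤ c α)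
    {β : Fin (n + 1) → ℕ} (hβ : β ∈ kvIdxEq n (e + 1)) : 1 ≤ stepc n e c β := by
  rw [mem_kvIdxEq] at hβ
  have hne : ∃ i ∈ (Finset.univ : Finset (Fin (n + 1))), β i ≠ 0 := by
    apply Finset.exists_ne_zero_of_sum_ne_zero
    omega
  obtain ⟨i, -, hi⟩ := hne
  set α₀ : Fin (n + 1) → ℕ := Function.update β i (β i - 1) with hα₀def
  have hβeq : α₀ + Pi.single i 1 = β := by
    funext k
    rcases eq_or_ne k i with rfl | hk
    · simp only [Pi.add_apply, hα₀def, Function.update_self, Pi.single_eq_same]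
      omega
    · simp [hα₀def, Function.update_of_ne hk, Pi.single_eq_of_ne hk]
  have hsum : ∑ k, α₀ k = e := by
    have := congrArg (fun f => ∑ k, f k) hβeq
    simp only [Pi.add_apply, Finset.sum_add_distrib, Finset.sum_pi_single'] at this
    simp only [Finset.mem_univ, if_true] at this
    omega
  have hα₀ : α₀ ∈ kvIdxEq n e := mem_kvIdxEq.2 hsum
  have hmem : (α₀, i) ∈ (kvIdxEq n e) ×ˢ (Finset.univ : Finset (Fin (n + 1))) :=
    Finset.mem_product.2 ⟨hα₀, Finset.mem_univ i⟩
  have hterm : (1 : ℝ) ≤ if α₀ + Pi.single i 1 = β then c α₀ else 0 := by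
    rw [if_pos hβeq]; exact hc _ hα₀
  refine le_trans hterm (Finset.single_le_sum (f := fun p : (Fin (n+1) → ℕ) × Fin (n+1) =>
    if p.1 + Pi.single p.2 1 = β then c p.1 else 0) (fun p hp => ?_) hmem)
  split_ifs with h
  · exact le_trans zero_le_one (hc _ (Finset.mem_product.1 hp).1)
  · exact le_refl 0

def KRep (n e : ℕ) (p : MvPolynomial (Fin n) ℝ) : Prop :=
  ∃ c : (Fin (n + 1) → ℕ) → ℝ, p = ∑ α ∈ kvIdxEq n e, C (c α) * kvGen n α

lemma KRep.succ {n e : ℕ} {p : MvPolynomial (Fin n) ℝ} (h : KRep n e p) : KRep n (e + 1) p := by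
  obtain ⟨c, hc⟩ := h
  exact ⟨stepc n e c, by rw [hc, kv_step]⟩

lemma KRep.mono {n e d : ℕ} {p : MvPolynomial (Fin n) ℝ} (hed : e ≤ d) (h : KRep n e p) :
    KRep n d p := by
  induction d, hed using Nat.le_induction with
  | base => exact h
  | succ d hd ih => exact ih.succ

lemma KRep.zero (n e : ℕ) : KRep n e 0 :=
  ⟨0, by simp⟩

lemma KRep.add {n e : ℕ} {p q : MvPolynomial (Fin n) ℝ} (hp : KRep n e p) (hq : KRep n e q) :
    KRep n e (p + q) := by
  obtain ⟨c, hc⟩ := hp; obtain ⟨c', hc'⟩ := hq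
  refine ⟨c + c', ?_⟩
  rw [hc, hc', ← Finset.sum_add_distrib]
  exact Finset.sum_congr rfl fun α _ => by rw [Pi.add_apply, C_add, add_mul]

lemma rep_single {n e : ℕ} (a : ℝ) {α₀ : Fin (n + 1) → ℕ} (h : ∑ i, α₀ i = e) :
    KRep n e (C a * kvGen n α₀) := by
  refine ⟨fun α => if α = α₀ then a else 0, ?_⟩
  have : ∀ α ∈ kvIdxEq n e,
      C (if α = α₀ then a else 0) * kvGen n α = if α = α₀ then C a * kvGen n α else 0 := by
    intro α _; split_ifs <;> simp
  rw [Finset.sum_congr rfl this, Finset.sum_ite_eq' (kvIdxEq n e) α₀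
    (fun α => C a * kvGen n α), if_pos (mem_kvIdxEq.2 h)]

lemma rep_monomial {n : ℕ} (v : Fin n →₀ ℕ) (a : ℝ) : KRep n (∑ i, v i) (monomial v a) := by
  have hgen : kvGen n (Fin.snoc ⇑v 0) = ∏ i, X i ^ v i := by
    simp [kvGen, Fin.snoc_castSucc, Fin.snoc_last]
  have hmono : monomial v a = C a * kvGen n (Fin.snoc ⇑v 0) := by
    rw [hgen, monomial_eq]
    congr 1
    rw [Finsupp.prod_pow]
  have hsum : ∑ i, (Fin.snoc ⇑v 0 : Fin (n + 1) → ℕ) i = ∑ i, v i := by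
    rw [Fin.sum_univ_castSucc]
    simp [Fin.snoc_castSucc, Fin.snoc_last]
  rw [hmono]
  exact rep_single a hsum

lemma rep_of_totalDegree_le {n d : ℕ} {p : MvPolynomial (Fin n) ℝ}
    (hp : p.totalDegree ≤ d) : KRep n d p := by
  rw [p.as_sum]
  refine Finset.sum_induction _ (KRep n d) (fun a b => KRep.add) (KRep.zero n d) fun v hv => ?_
  refine (rep_monomial v (coeff v p)).mono ?_
  have h1 : ∑ i, v i = v.sum fun _ e => e := by
    rw [Finsupp.sum_fintype]; intro; rfl
  have h2 : (v.sum fun _ e => e) ≤ p.totalDegree := le_totalDegree hv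
  omega

lemma one_rep_pos (n d : ℕ) :
    ∃ m : (Fin (n + 1) → ℕ) → ℝ, (∀ α ∈ kvIdxEq n d, 1 ≤ m α) ∧
      (1 : MvPolynomial (Fin n) ℝ) = ∑ α ∈ kvIdxEq n d, C (m α) * kvGen n α := by
  induction d with
  | zero =>
    refine ⟨fun _ => 1, fun _ _ => le_refl 1, ?_⟩
    have hset : kvIdxEq n 0 = {0} := by
      ext α
      rw [mem_kvIdxEq, Finset.mem_singleton]
      constructor
      · intro h
        funext i
        have := Finset.sum_eq_zero_iff.1 h i (Finset.mem_univ i)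
        simpa using this
      · rintro rfl; simp
    rw [hset, Finset.sum_singleton, kvGen_zero]
    simp
  | succ e ih =>
    obtain ⟨m, hm, h1⟩ := ih
    refine ⟨stepc n e m, fun β hβ => stepc_pos hm hβ, ?_⟩
    calc (1 : MvPolynomial (Fin n) ℝ) = ∑ α ∈ kvIdxEq n e, C (m α) * kvGen n α := h1
      _ = _ := kv_step n e m

lemma kvGen_totalDegree {n d : ℕ} {α : Fin (n + 1) → ℕ} (h : ∑ i, α i ≤ d) :
    (kvGen n α).totalDegree ≤ d := by
  have hs : (1 - ∑ i, X i : MvPolynomial (Fin n) ℝ).totalDegree ≤ 1 := by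
    rw [sub_eq_add_neg]
    refine le_trans (totalDegree_add _ _) ?_
    rw [totalDegree_neg, totalDegree_one]
    refine max_le (Nat.zero_le 1) ?_
    refine le_trans (totalDegree_finset_sum _ _) ?_
    refine Finset.sup_le fun i _ => ?_
    rw [totalDegree_X]
  have h1 : (∏ i : Fin n, (X i : MvPolynomial (Fin n) ℝ) ^ α i.castSucc).totalDegree ≤
      ∑ i : Fin n, α i.castSucc := by
    refine le_trans (totalDegree_finset_prod _ _) (Finset.sum_le_sum fun i _ => ?_)
    refine le_trans (totalDegree_pow _ _) ?_
    rw [totalDegree_X, mul_one]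
  have h2 : ((1 - ∑ i, X i : MvPolynomial (Fin n) ℝ) ^ α (Fin.last n)).totalDegree ≤
      α (Fin.last n) := by
    refine le_trans (totalDegree_pow _ _) ?_
    calc α (Fin.last n) * (1 - ∑ i, X i : MvPolynomial (Fin n) ℝ).totalDegree
        ≤ α (Fin.last n) * 1 := Nat.mul_le_mul_left _ hs
      _ = α (Fin.last n) := mul_one _
  refine le_trans (totalDegree_mul _ _) ?_
  calc (∏ i : Fin n, (X i : MvPolynomial (Fin n) ℝ) ^ α i.castSucc).totalDegree +
        ((1 - ∑ i, X i : MvPolynomial (Fin n) ℝ) ^ α (Fin.last n)).totalDegree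
      ≤ (∑ i : Fin n, α i.castSucc) + α (Fin.last n) := Nat.add_le_add h1 h2
    _ = ∑ i : Fin (n + 1), α i := (Fin.sum_univ_castSucc α).symm
    _ ≤ d := h

lemma mem_kvIdxLe {n d : ℕ} {α : Fin (n + 1) → ℕ} : α ∈ kvIdxLe n d ↔ ∑ i, α i ≤ d := by
  simp only [kvIdxLe, Finset.mem_filter, Fintype.mem_piFinset, Finset.mem_range]
  refine ⟨fun h => h.2, fun h => ⟨fun i => ?_, h⟩⟩
  have : α i ≤ ∑ j, α j :=
    Finset.single_le_sum (f := α) (fun j _ => Nat.zero_le _) (Finset.mem_univ i)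
  omega

/-- A nonnegative combination over `kvIdxEq` lies in `coneLe`. -/
lemma sum_mem_coneLe {n d : ℕ} {u : (Fin (n + 1) → ℕ) → ℝ}
    (hu : ∀ α ∈ kvIdxEq n d, 0 ≤ u α) :
    (∑ α ∈ kvIdxEq n d, C (u α) * kvGen n α) ∈ coneLe n d := by
  refine ⟨fun α => if α ∈ kvIdxEq n d then u α else 0, fun α => ?_, ?_⟩
  · dsimp only
    split_ifs with h
    · exact hu _ h
    · exact le_refl 0
  · have hsub : kvIdxEq n d ⊆ kvIdxLe n d := fun α hα =>
      mem_kvIdxLe.2 (le_of_eq (mem_kvIdxEq.1 hα))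
    rw [← Finset.sum_subset hsub (fun α _ hα => by dsimp only; rw [if_neg hα, C_0, zero_mul])]
    exact Finset.sum_congr rfl fun α hα => by dsimp only; rw [if_pos hα]

lemma coneLe_totalDegree {n d : ℕ} {p : MvPolynomial (Fin n) ℝ} (hp : p ∈ coneLe n d) :
    p.totalDegree ≤ d := by
  obtain ⟨u, -, rfl⟩ := hp
  refine le_trans (totalDegree_finset_sum _ _) (Finset.sup_le fun α hα => ?_)
  refine le_trans (totalDegree_mul _ _) ?_
  rw [totalDegree_C, zero_add]
  exact kvGen_totalDegree (mem_kvIdxLe.1 hα)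

lemma mem_posi_of_mem {E : Type*} [AddCommMonoid E] [Module ℝ E] {S : Set E} {x : E}
    (h : x ∈ S) : x ∈ posi S :=
  ⟨1, fun _ => 1, fun _ => x, fun _ => zero_le_one, fun _ => h, by simp⟩

lemma posi_add {E : Type*} [AddCommMonoid E] [Module ℝ E] {S : Set E} {x y : E}
    (hx : x ∈ posi S) (hy : y ∈ posi S) : x + y ∈ posi S := by
  obtain ⟨k, l, g, hl, hg, rfl⟩ := hx
  obtain ⟨k', l', g', hl', hg', rfl⟩ := hy
  refine ⟨k + k', Fin.append l l', Fin.append g g', fun i => ?_, fun i => ?_, ?_⟩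
  · refine Fin.addCases (fun j => ?_) (fun j => ?_) i
    · rw [Fin.append_left]; exact hl j
    · rw [Fin.append_right]; exact hl' j
  · refine Fin.addCases (fun j => ?_) (fun j => ?_) i
    · rw [Fin.append_left]; exact hg j
    · rw [Fin.append_right]; exact hg' j
  · rw [Fin.sum_univ_add]
    congr 1
    · exact Finset.sum_congr rfl fun j _ => by rw [Fin.append_left, Fin.append_left]
    · exact Finset.sum_congr rfl fun j _ => by rw [Fin.append_right, Fin.append_right]

lemma posi_smul {E : Type*} [AddCommMonoid E] [Module ℝ E] {S : Set E} {x : E} {r : ℝ}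
    (hr : 0 ≤ r) (hx : x ∈ posi S) : r • x ∈ posi S := by
  obtain ⟨k, l, g, hl, hg, rfl⟩ := hx
  refine ⟨k, fun i => r * l i, g, fun i => mul_nonneg hr (hl i), hg, ?_⟩
  rw [Finset.smul_sum]
  exact Finset.sum_congr rfl fun i _ => by dsimp only; rw [smul_smul]

lemma neg_one_mem_core (n d : ℕ) :
    (-1 : MvPolynomial (Fin n) ℝ) ∈ core n d {g : MvPolynomial (Fin n) ℝ | -g ∈ coneLe n d} := by
  obtain ⟨m, hm, h1⟩ := one_rep_pos n d
  constructor
  · show -(-1 : MvPolynomial (Fin n) ℝ) ∈ coneLe n d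
    rw [neg_neg, h1]
    exact sum_mem_coneLe fun α hα => le_trans zero_le_one (hm α hα)
  · intro h hdeg
    obtain ⟨c, hcrep⟩ := rep_of_totalDegree_le hdeg
    set M : ℝ := ∑ α ∈ kvIdxEq n d, |c α| with hMdef
    have hM : 0 ≤ M := Finset.sum_nonneg fun α _ => abs_nonneg _
    refine ⟨1 / (M + 1), by positivity, fun t ht0 htε => ?_⟩
    show -(-1 + t • h) ∈ coneLe n d
    have hrw : -(-1 + t • h) = (1 : MvPolynomial (Fin n) ℝ) - t • h := by ring
    have hsum : (1 : MvPolynomial (Fin n) ℝ) - t • h =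
        ∑ α ∈ kvIdxEq n d, C (m α - t * c α) * kvGen n α := by
      conv_lhs => rw [h1, hcrep]
      rw [Finset.smul_sum, ← Finset.sum_sub_distrib]
      refine Finset.sum_congr rfl fun α _ => ?_
      rw [smul_eq_C_mul, ← mul_assoc, ← C_mul, ← sub_mul, ← C_sub]
    rw [hrw, hsum]
    refine sum_mem_coneLe fun α hα => ?_
    have h1m := hm α hα
    have habs : |c α| ≤ M :=
      Finset.single_le_sum (f := fun β => |c β|) (fun β _ => abs_nonneg _) hα
    have h2 : t * c α ≤ 1 := by
      have ha : t * c α ≤ t * |c α| := mul_le_mul_of_nonneg_left (le_abs_self _) ht0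
      have hb : t * |c α| ≤ (1 / (M + 1)) * (M + 1) := by
        refine mul_le_mul htε (by linarith) (abs_nonneg _) (by positivity)
      have hc1 : (1 / (M + 1)) * (M + 1) = 1 := by
        field_simp
      linarith
    linarith

lemma posi_subset_deg {n d : ℕ} (G : Finset (MvPolynomial (Fin n) ℝ))
    (hG : ∀ g ∈ G, g.totalDegree ≤ d) {p : MvPolynomial (Fin n) ℝ}
    (hp : p ∈ posi ((G : Set (MvPolynomial (Fin n) ℝ)) ∪ coneLe n d)) :
    p ∈ restrictTotalDegree (Fin n) ℝ d := by
  obtain ⟨k, l, g, hl, hg, rfl⟩ := hp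
  refine Submodule.sum_mem _ fun i _ => Submodule.smul_mem _ _ ?_
  rw [mem_restrictTotalDegree]
  rcases hg i with h | h
  · exact hG _ h
  · exact coneLe_totalDegree h

/-- duality. `C = posi(G ∪ Σ≥_d)` is P-coherent (misses the
interior `Σ<_d` of `-Σ≥_d`) iff the dual set of normalized linear functionals,
nonnegative on `Σ≥_d` and on `G`, is nonempty. -/
theorem stmt19 (n d : ℕ) (G : Finset (MvPolynomial (Fin n) ℝ))
    (hG : ∀ g ∈ G, g.totalDegree ≤ d) :
    posi ((G : Set (MvPolynomial (Fin n) ℝ)) ∪ coneLe n d) ∩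
        core n d {g : MvPolynomial (Fin n) ℝ | -g ∈ coneLe n d} = ∅ ↔
      ∃ L : MvPolynomial (Fin n) ℝ →ₗ[ℝ] ℝ,
        L 1 = 1 ∧ (∀ p ∈ coneLe n d, 0 ≤ L p) ∧ (∀ g ∈ G, 0 ≤ L g) := by
  constructor
  · intro hEmpty
    have hnot : (-1 : MvPolynomial (Fin n) ℝ) ∉
        posi ((G : Set (MvPolynomial (Fin n) ℝ)) ∪ coneLe n d) := by
      intro hmem
      have h2 : (-1 : MvPolynomial (Fin n) ℝ) ∈
          posi ((G : Set (MvPolynomial (Fin n) ℝ)) ∪ coneLe n d) ∩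
            core n d {g : MvPolynomial (Fin n) ℝ | -g ∈ coneLe n d} :=
        ⟨hmem, neg_one_mem_core n d⟩
      rw [hEmpty] at h2
      exact h2
    obtain ⟨U, hU⟩ := Submodule.exists_isCompl (restrictTotalDegree (Fin n) ℝ d)
    set K : ConvexCone ℝ (MvPolynomial (Fin n) ℝ) :=
      { carrier := {x | ∃ p ∈ posi ((G : Set (MvPolynomial (Fin n) ℝ)) ∪ coneLe n d),
          ∃ u ∈ U, x = p + u}
        smul_mem' := by
          rintro cc hc x ⟨p, hp, u, hu, rfl⟩
          exact ⟨cc • p, posi_smul (le_of_lt hc) hp, cc • u, U.smul_mem _ hu, by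
            rw [smul_add]⟩
        add_mem' := by
          rintro x ⟨p, hp, u, hu, rfl⟩ y ⟨p', hp', u', hu', rfl⟩
          exact ⟨p + p', posi_add hp hp', u + u', U.add_mem hu hu', by abel⟩ } with hK
    set f : MvPolynomial (Fin n) ℝ →ₗ.[ℝ] ℝ :=
      LinearPMap.mkSpanSingleton (1 : MvPolynomial (Fin n) ℝ) (1 : ℝ) one_ne_zero with hf
    have hmemK : ∀ x, x ∈ K ↔ ∃ p ∈ posi ((G : Set (MvPolynomial (Fin n) ℝ)) ∪ coneLe n d),
        ∃ u ∈ U, x = p + u := fun x => Iff.rfl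
    have h1V : (1 : MvPolynomial (Fin n) ℝ) ∈ restrictTotalDegree (Fin n) ℝ d := by
      rw [mem_restrictTotalDegree, totalDegree_one]
      exact Nat.zero_le d
    have nonneg : ∀ x : f.domain, (x : MvPolynomial (Fin n) ℝ) ∈ K → 0 ≤ f x := by
      rintro ⟨x, hx⟩ hxK
      obtain ⟨cc, hcc⟩ := Submodule.mem_span_singleton.1 hx
      obtain ⟨p, hp, u, hu, hxpu⟩ := (hmemK x).1 hxK
      have hpV : p ∈ restrictTotalDegree (Fin n) ℝ d := posi_subset_deg G hG hp
      have hxV : x ∈ restrictTotalDegree (Fin n) ℝ d := by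
        rw [← hcc]
        exact Submodule.smul_mem _ _ h1V
      have huV : u ∈ restrictTotalDegree (Fin n) ℝ d := by
        have hux : u = x - p := by rw [hxpu]; ring
        rw [hux]
        exact Submodule.sub_mem _ hxV hpV
      have hu0 : u = 0 := by
        have : u ∈ (⊥ : Submodule ℝ (MvPolynomial (Fin n) ℝ)) :=
          hU.disjoint.le_bot (Submodule.mem_inf.2 ⟨huV, hu⟩)
        exact (Submodule.mem_bot _).1 this
      have hpx : p = cc • (1 : MvPolynomial (Fin n) ℝ) := by
        rw [hcc, hxpu, hu0, add_zero]
      have hcc0 : 0 ≤ cc := by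
        by_contra hlt
        push_neg at hlt
        apply hnot
        have hrw : (-1 : MvPolynomial (Fin n) ℝ) = (-cc⁻¹) • p := by
          rw [hpx, smul_smul]
          have hccne : cc ≠ 0 := ne_of_lt hlt
          have : -cc⁻¹ * cc = -1 := by field_simp
          rw [this]
          simp
        rw [hrw]
        refine posi_smul ?_ hp
        have hccinv : cc⁻¹ < 0 := inv_lt_zero.mpr hlt
        linarith
      have happ : f ⟨x, hx⟩ = cc • (1 : ℝ) := by
        have hxeq : (⟨x, hx⟩ : f.domain) = ⟨cc • 1, hcc ▸ hx⟩ := Subtype.ext hcc.symm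
        rw [hxeq]
        exact LinearPMap.mkSpanSingleton'_apply _ _ _ cc _
      rw [happ, smul_eq_mul, mul_one]
      exact hcc0
    have dense : ∀ y, ∃ x : f.domain, (x : MvPolynomial (Fin n) ℝ) + y ∈ K := by
      intro y
      have hy : y ∈ restrictTotalDegree (Fin n) ℝ d ⊔ U := by
        rw [hU.sup_eq_top]
        trivial
      obtain ⟨v, hv, u, hu, hvu⟩ := Submodule.mem_sup.1 hy
      rw [mem_restrictTotalDegree] at hv
      obtain ⟨c, hcrep⟩ := rep_of_totalDegree_le hv
      obtain ⟨m, hm, h1⟩ := one_rep_pos n d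
      set M : ℝ := ∑ α ∈ kvIdxEq n d, |c α| with hMdef
      have hMv : M • (1 : MvPolynomial (Fin n) ℝ) + v ∈ coneLe n d := by
        have heq : M • (1 : MvPolynomial (Fin n) ℝ) + v =
            ∑ α ∈ kvIdxEq n d, C (M * m α + c α) * kvGen n α := by
          conv_lhs => rw [h1, hcrep]
          rw [Finset.smul_sum, ← Finset.sum_add_distrib]
          refine Finset.sum_congr rfl fun α _ => ?_
          rw [smul_eq_C_mul, ← mul_assoc, ← C_mul, ← add_mul, ← C_add]
        rw [heq]
        refine sum_mem_coneLe fun α hα => ?_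
        have h1m := hm α hα
        have habs : |c α| ≤ M :=
          Finset.single_le_sum (f := fun β => |c β|) (fun β _ => abs_nonneg _) hα
        have hM0 : 0 ≤ M := Finset.sum_nonneg fun β _ => abs_nonneg _
        nlinarith [neg_abs_le (c α)]
      refine ⟨⟨M • 1, Submodule.smul_mem _ _ (Submodule.mem_span_singleton_self 1)⟩, ?_⟩
      refine (hmemK _).2 ⟨M • 1 + v, mem_posi_of_mem (Or.inr hMv), u, hu, ?_⟩
      rw [← hvu]
      abel
    have hKp : K.Pointed := (hmemK 0).2 ⟨0, ⟨0, Fin.elim0, Fin.elim0, fun i => i.elim0,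
      fun i => i.elim0, by simp⟩, 0, U.zero_mem, by simp⟩
    obtain ⟨g, hgf, hgK0⟩ := riesz_extension (K.toPointedCone hKp) f
      (fun x hx => nonneg x ((K.mem_toPointedCone hKp _).1 hx)) dense
    have hgK : ∀ x ∈ K, 0 ≤ g x := fun x hx => hgK0 x ((K.mem_toPointedCone hKp x).2 hx)
    refine ⟨g, ?_, ?_, ?_⟩
    · have h1d : (1 : MvPolynomial (Fin n) ℝ) ∈ f.domain :=
        Submodule.mem_span_singleton_self 1
      have := hgf ⟨1, h1d⟩
      rw [this]
      exact LinearPMap.mkSpanSingleton'_apply_self _ _ _ _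
    · intro p hp
      exact hgK p ((hmemK p).2 ⟨p, mem_posi_of_mem (Or.inr hp), 0, U.zero_mem,
        (add_zero p).symm⟩)
    · intro g0 hg0
      exact hgK g0 ((hmemK g0).2 ⟨g0, mem_posi_of_mem (Or.inl hg0), 0, U.zero_mem,
        (add_zero g0).symm⟩)
  · rintro ⟨L, hL1, hLcone, hLG⟩
    rw [Set.eq_empty_iff_forall_notMem]
    rintro p ⟨hpC, hpS, hpcore⟩
    have hp0 : 0 ≤ L p := by
      obtain ⟨k, l, g, hl, hg, rfl⟩ := hpC
      rw [map_sum]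
      refine Finset.sum_nonneg fun i _ => ?_
      rw [map_smul, smul_eq_mul]
      refine mul_nonneg (hl i) ?_
      rcases hg i with h | h
      · exact hLG _ h
      · exact hLcone _ h
    obtain ⟨ε, hε, hεmem⟩ := hpcore 1 (by rw [totalDegree_one]; exact Nat.zero_le d)
    have hmem := hεmem ε (le_of_lt hε) (le_refl ε)
    have hL2 := hLcone _ hmem
    rw [map_neg, map_add, map_smul, hL1, smul_eq_mul, mul_one] at hL2
    linarith
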